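/- The monodromy filtration is the unique finite increasing filtration of M by submodules with its two characterizing properties. Precisely: let W : ℤ → (submodules of M) be a monotone family such that W_a = 0 for all sufficiently small a and W_a = M for all sufficiently large a, such that N(W_a) ⊆ W_{a−2} for every integer a, and such that for every integer a ≥ 0 the map W_a/W_{a−1} → W_{−a}/W_{−a−1} induced by N^a (which is well defined since N^a(W_a) ⊆ W_{−a} and N^a(W_{a−1}) ⊆ W_{−a−1}) is an isomorphism. Then W_a = fil^M_a M for every integer a. -/

import Mathlib

/-- `fil_a M = ker(N^{a+1})` for `a ≥ −1`, and `fil_a M = 0` for `a < −1`. -/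
noncomputable def filKer {R M : Type*} [CommRing R] [AddCommGroup M] [Module R M]
    (N : M →ₗ[R] M) (a : ℤ) : Submodule R M :=
  LinearMap.ker (N ^ (a + 1).toNat)

/-- `fil^a M = range(N^a)` for `a ≥ 0`, and `fil^a M = M` for `a < 0`. -/
noncomputable def filRange {R M : Type*} [CommRing R] [AddCommGroup M] [Module R M]
    (N : M →ₗ[R] M) (a : ℤ) : Submodule R M :=
  LinearMap.range (N ^ a.toNat)

/-- The monodromy filtration `fil^M_a M = Σ_{b−c=a} (fil_b M ∩ fil^c M)`. -/
noncomputable def filMonodromy {R M : Type*} [CommRing R] [AddCommGroup M] [Module R M]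
    (N : M →ₗ[R] M) (a : ℤ) : Submodule R M :=
  ⨆ (b : ℤ) (c : ℤ) (_ : b - c = a), filKer N b ⊓ filRange N c


section Helpers
variable {R M : Type*} [CommRing R] [AddCommGroup M] [Module R M] (N : M →ₗ[R] M)

lemma kerPow_mono {m m' : ℕ} (h : m ≤ m') :
    LinearMap.ker (N ^ m) ≤ LinearMap.ker (N ^ m') := by
  intro x hx
  simp only [LinearMap.mem_ker] at hx ⊢
  have : N ^ m' = N ^ (m' - m) * N ^ m := by
    rw [← pow_add]; congr 1; omega
  rw [this, Module.End.mul_apply, hx, map_zero]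

lemma piece_le {b c a : ℤ} (h : b - c = a) :
    filKer N b ⊓ filRange N c ≤ filMonodromy N a := by
  intro x hx
  exact Submodule.mem_iSup_of_mem b (Submodule.mem_iSup_of_mem c (Submodule.mem_iSup_of_mem h hx))

lemma filMonodromy_mono {a a' : ℤ} (h : a ≤ a') :
    filMonodromy N a ≤ filMonodromy N a' := by
  refine iSup_le fun b => iSup_le fun c => iSup_le fun hbc => ?_
  refine le_trans (inf_le_inf_right _ ?_)
    (piece_le N (a := a') (b := b + (a' - a)) (c := c) (by omega))
  exact kerPow_mono N (by omega)

lemma filKer_neg {b : ℤ} (h : b ≤ -1) : filKer N b = ⊥ := by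
  unfold filKer
  have : (b + 1).toNat = 0 := by omega
  rw [this, pow_zero]
  exact LinearMap.ker_id

lemma filRange_nonpos {c : ℤ} (h : c ≤ 0) : filRange N c = ⊤ := by
  unfold filRange
  have : c.toNat = 0 := by omega
  rw [this, pow_zero]
  exact LinearMap.range_id

lemma mapFil (k : ℕ) (a : ℤ) :
    Submodule.map (N ^ k) (filMonodromy N a) ≤ filMonodromy N (a - 2 * k) := by
  unfold filMonodromy
  rw [Submodule.map_iSup]
  refine iSup_le fun b => ?_
  rw [Submodule.map_iSup]
  refine iSup_le fun c => ?_
  rw [Submodule.map_iSup]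
  refine iSup_le fun hbc => ?_
  rintro x ⟨y, ⟨hky, c', hc'⟩, rfl⟩
  refine piece_le N (a := a - 2 * k) (b := b - k) (c := c + k) (by omega) ⟨?_, ?_⟩
  · have hky' : (N ^ (b + 1).toNat) y = 0 := hky
    have hle : (b + 1).toNat ≤ (b - (k : ℤ) + 1).toNat + k := by omega
    have h0 : (N ^ ((b - (k : ℤ) + 1).toNat + k)) y = 0 := kerPow_mono N hle hky'
    show (N ^ (b - (k : ℤ) + 1).toNat) ((N ^ k) y) = 0
    rw [← Module.End.mul_apply, ← pow_add, h0]
  · refine ⟨(N ^ (c.toNat + k - (c + (k : ℤ)).toNat)) c', ?_⟩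
    rw [← hc']
    show (N ^ (c + (k : ℤ)).toNat) ((N ^ (c.toNat + k - (c + (k : ℤ)).toNat)) c')
        = (N ^ k) ((N ^ c.toNat) c')
    have he : (c + (k : ℤ)).toNat + (c.toNat + k - (c + (k : ℤ)).toNat) = k + c.toNat := by
      omega
    rw [← Module.End.mul_apply, ← pow_add, ← Module.End.mul_apply, ← pow_add, he]

lemma liftFil {a : ℤ} (ha : -1 ≤ a) :
    filMonodromy N (-a - 2) ≤ Submodule.map (N ^ (a + 1).toNat) (filMonodromy N a) := by
  refine iSup_le fun b => iSup_le fun c => iSup_le fun hbc => ?_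
  by_cases hb : b ≤ -1
  · rw [filKer_neg N hb]
    simp
  · push_neg at hb
    rintro x ⟨hkx, y, hy⟩
    have hkx' : (N ^ (b + 1).toNat) x = 0 := hkx
    -- w := N ^ (b+1) y  (since c - (a+1) = b + 1)
    refine ⟨(N ^ (b + 1).toNat) y, piece_le N (a := a) (b := b + a + 1) (c := c - a - 1)
      (by omega) ⟨?_, ?_⟩, ?_⟩
    · have h0 : (N ^ ((b + 1).toNat + c.toNat)) y = 0 := by
        rw [pow_add, Module.End.mul_apply, hy]
        exact hkx'
      show (N ^ (b + a + 1 + 1).toNat) ((N ^ (b + 1).toNat) y) = 0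
      rw [← Module.End.mul_apply, ← pow_add]
      exact kerPow_mono N (by omega) h0
    · refine ⟨y, ?_⟩
      show (N ^ (c - a - 1).toNat) y = (N ^ (b + 1).toNat) y
      have he : (c - a - 1).toNat = (b + 1).toNat := by omega
      rw [he]
    · rw [← hy, ← Module.End.mul_apply, ← pow_add]
      have he : (a + 1).toNat + (b + 1).toNat = c.toNat := by omega
      rw [he]

end Helpers


/-- Uniqueness of the monodromy filtration: any exhaustive, separated, monotone filtration
`W` with `N(W_a) ⊆ W_{a−2}` such that for all `a ≥ 0` the map `W_a/W_{a−1} → W_{−a}/W_{−a−1}`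
induced by `N^a` is an isomorphism, coincides with the monodromy filtration. -/
theorem statement7 {R M : Type*} [CommRing R] [AddCommGroup M] [Module R M]
    (N : M →ₗ[R] M) (hN : IsNilpotent N)
    (W : ℤ → Submodule R M) (hmono : Monotone W)
    (hbot : ∃ n : ℤ, ∀ a ≤ n, W a = ⊥)
    (htop : ∃ n : ℤ, ∀ a : ℤ, n ≤ a → W a = ⊤)
    (hshift : ∀ a : ℤ, ∀ x ∈ W a, N x ∈ W (a - 2))
    (hNa : ∀ a : ℤ, 0 ≤ a → ∀ x ∈ W a, (N ^ a.toNat) x ∈ W (-a))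
    (hNa' : ∀ a : ℤ, 0 ≤ a → ∀ x ∈ W (a - 1), (N ^ a.toNat) x ∈ W (-a - 1))
    (hiso : ∀ (a : ℤ) (ha : 0 ≤ a),
      Function.Bijective
        (Submodule.mapQ ((W (a - 1)).comap (W a).subtype)
          ((W (-a - 1)).comap (W (-a)).subtype)
          (LinearMap.restrict (N ^ a.toNat) (fun x hx => hNa a ha x hx))
          (by exact fun x hx => hNa' a ha x.1 hx))) :
    ∀ a : ℤ, W a = filMonodromy N a := by
  obtain ⟨k, hk⟩ := hN
  obtain ⟨nb, hnb⟩ := hbot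
  obtain ⟨nt, hnt⟩ := htop
  -- injectivity consequence
  have hinj : ∀ a : ℤ, 0 ≤ a → ∀ x (hx : x ∈ W a),
      (N ^ a.toNat) x ∈ W (-a - 1) → x ∈ W (a - 1) := by
    intro a ha x hx hNx
    have hb := (hiso a ha).injective
    have h1 : Submodule.mapQ ((W (a - 1)).comap (W a).subtype)
          ((W (-a - 1)).comap (W (-a)).subtype)
          (LinearMap.restrict (N ^ a.toNat) (fun x hx => hNa a ha x hx))
          (by exact fun x hx => hNa' a ha x.1 hx)
          (Submodule.Quotient.mk ⟨x, hx⟩) = 0 := by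
      erw [Submodule.mapQ_apply, Submodule.Quotient.mk_eq_zero]
      simpa [Submodule.mem_comap, LinearMap.restrict_apply] using hNx
    have h2 : (Submodule.Quotient.mk (⟨x, hx⟩ : W a) :
        (W a) ⧸ (W (a - 1)).comap (W a).subtype) = 0 := hb (by rw [h1, map_zero])
    rw [Submodule.Quotient.mk_eq_zero] at h2
    simpa [Submodule.mem_comap] using h2
  -- surjectivity consequence
  have hsurj : ∀ a : ℤ, 0 ≤ a → ∀ x (hx : x ∈ W (-a)),
      ∃ y ∈ W a, x - (N ^ a.toNat) y ∈ W (-a - 1) := by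
    intro a ha x hx
    obtain ⟨u, hu⟩ := (hiso a ha).surjective (Submodule.Quotient.mk ⟨x, hx⟩)
    obtain ⟨⟨y, hy⟩, rfl⟩ := Submodule.Quotient.mk_surjective _ u
    refine ⟨y, hy, ?_⟩
    erw [Submodule.mapQ_apply, Submodule.Quotient.eq] at hu
    have := hu
    simp only [Submodule.mem_comap, LinearMap.restrict_apply] at this
    have h3 : (N ^ a.toNat) y - x ∈ W (-a - 1) := this
    have h4 := (W (-a - 1)).neg_mem h3
    simpa using h4
  -- iterated shift
  have hshiftpow : ∀ (j : ℕ) (a : ℤ) (x : M), x ∈ W a → (N ^ j) x ∈ W (a - 2 * j) := by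
    intro j
    induction j with
    | zero => intro a x hx; simpa using hx
    | succ j ih =>
      intro a x hx
      have h1 := hshift _ _ (ih a x hx)
      have he : a - 2 * (j : ℤ) - 2 = a - 2 * ((j : ℕ) + 1 : ℕ) := by push_cast; ring
      rw [he] at h1
      have h2 : (N ^ (j + 1)) x = N ((N ^ j) x) := by
        rw [pow_succ']; rfl
      rwa [h2]
  -- ker N^{b+1} ≤ W b
  have hker_le : ∀ b : ℤ, filKer N b ≤ W b := by
    intro b
    by_cases hb : b ≤ -1
    · rw [filKer_neg N hb]; exact bot_le
    · push_neg at hb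
      have key : ∀ d : ℕ, ∀ x : M, (N ^ (b + 1).toNat) x = 0 → x ∈ W (b + (d : ℤ)) → x ∈ W b := by
        intro d
        induction d with
        | zero => intro x h hx; simpa using hx
        | succ d ih =>
          intro x h hx
          have he : b + ((d + 1 : ℕ) : ℤ) = b + (d : ℤ) + 1 := by push_cast; ring
          rw [he] at hx
          have ha' : (0 : ℤ) ≤ b + (d : ℤ) + 1 := by omega
          have hz : (N ^ (b + (d : ℤ) + 1).toNat) x = 0 := kerPow_mono N (by omega) h
          have h2 := hinj (b + (d : ℤ) + 1) ha' x hx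
            (by rw [hz]; exact Submodule.zero_mem _)
          have he2 : b + (d : ℤ) + 1 - 1 = b + (d : ℤ) := by ring
          rw [he2] at h2
          exact ih x h h2
      intro x hx
      have hx' : (N ^ (b + 1).toNat) x = 0 := hx
      exact key (nt - b).toNat x hx' (by rw [hnt _ (by omega)]; trivial)
  -- F ≤ W
  have hF_le_W : ∀ a : ℤ, filMonodromy N a ≤ W a := by
    intro a
    refine iSup_le fun b => iSup_le fun c => iSup_le fun hbc => ?_
    by_cases hc : c ≤ 0
    · rw [filRange_nonpos N hc, inf_top_eq]
      exact le_trans (hker_le b) (hmono (by omega))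
    · push_neg at hc
      rintro x ⟨hkx, y, hy⟩
      by_cases hb : b ≤ -1
      · rw [filKer_neg N hb] at hkx
        have : x = 0 := hkx
        rw [this]; exact Submodule.zero_mem _
      · push_neg at hb
        have hkx' : (N ^ (b + 1).toNat) x = 0 := hkx
        have hy' : (N ^ (b + c + 1).toNat) y = 0 := by
          have he : (b + c + 1).toNat = (b + 1).toNat + c.toNat := by omega
          rw [he, pow_add, Module.End.mul_apply, hy]
          exact hkx'
        have hyW : y ∈ W (b + c) := hker_le (b + c) hy'
        have h1 := hshiftpow c.toNat (b + c) y hyW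
        rw [hy] at h1
        have he2 : b + c - 2 * (c.toNat : ℤ) = a := by omega
        rwa [he2] at h1
  -- F is eventually top
  have hFtop : ∀ a : ℤ, (k : ℤ) ≤ a → filMonodromy N a = ⊤ := by
    intro a ha
    refine top_unique (le_trans ?_ (piece_le N (a := a) (b := a) (c := 0) (by ring)))
    rw [filRange_nonpos N le_rfl, inf_top_eq]
    intro x _
    show (N ^ (a + 1).toNat) x = 0
    have hz : N ^ (a + 1).toNat = 0 := by
      have h1 : N ^ (a + 1).toNat = N ^ ((a + 1).toNat - k) * N ^ k := by
        rw [← pow_add]; congr 1; omega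
      rw [h1, hk, mul_zero]
    rw [hz]; rfl
  -- iterated surjectivity
  have hL6 : ∀ (c : ℕ) (G : Submodule R M),
      (∀ j : ℕ, c ≤ j → Submodule.map (N ^ j) (W (j : ℤ)) ≤ G) → W (-(c : ℤ)) ≤ G := by
    intro c G hG
    have key : ∀ d : ℕ, W (-(c : ℤ)) ≤ G ⊔ W (-(c : ℤ) - (d : ℤ)) := by
      intro d
      induction d with
      | zero => simpa using le_sup_right
      | succ d ih =>
        refine le_trans ih (sup_le le_sup_left ?_)
        intro x hx
        have hx' : x ∈ W (-((c + d : ℕ) : ℤ)) := by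
          have he : -(c : ℤ) - (d : ℤ) = -((c + d : ℕ) : ℤ) := by push_cast; ring
          rwa [he] at hx
        obtain ⟨y, hyW, hrem⟩ := hsurj ((c + d : ℕ) : ℤ) (by positivity) x hx'
        rw [Int.toNat_natCast] at hrem
        have h1 : (N ^ (c + d)) y ∈ G := hG (c + d) (by omega) ⟨y, hyW, rfl⟩
        have h2 : x - (N ^ (c + d)) y ∈ W (-(c : ℤ) - ((d + 1 : ℕ) : ℤ)) := by
          have he : -((c + d : ℕ) : ℤ) - 1 = -(c : ℤ) - ((d + 1 : ℕ) : ℤ) := by push_cast; ring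
          rwa [he] at hrem
        have hx2 : x = (N ^ (c + d)) y + (x - (N ^ (c + d)) y) := by abel
        rw [hx2]
        exact Submodule.add_mem _ (Submodule.mem_sup_left h1) (Submodule.mem_sup_right h2)
    have h := key (-(c : ℤ) - nb).toNat
    rwa [hnb (-(c : ℤ) - ((-(c : ℤ) - nb).toNat : ℤ)) (by omega), sup_bot_eq] at h
  -- main downward induction step
  have hstep : ∀ a : ℤ, (∀ a' : ℤ, a < a' → W a' ≤ filMonodromy N a') →
      W a ≤ filMonodromy N a := by
    intro a IH
    by_cases ha : -1 ≤ a
    · intro x hx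
      have hu : (N ^ (a + 1).toNat) x ∈ W (-(((a + 2).toNat : ℕ)) : ℤ) := by
        have h1 := hshiftpow (a + 1).toNat a x hx
        have he : a - 2 * ((a + 1).toNat : ℤ) = -(((a + 2).toNat : ℕ) : ℤ) := by omega
        rwa [he] at h1
      have hle : W (-(((a + 2).toNat : ℕ)) : ℤ) ≤ filMonodromy N (-a - 2) := by
        refine hL6 (a + 2).toNat (filMonodromy N (-a - 2)) ?_
        intro j hj
        refine le_trans (Submodule.map_mono (IH (j : ℤ) (by omega))) ?_
        refine le_trans (mapFil N j (j : ℤ)) (filMonodromy_mono N (by omega))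
      have hu2 := liftFil N ha (hle hu)
      obtain ⟨w, hwF, hw⟩ := hu2
      have hxw : x - w ∈ filKer N a ⊓ filRange N 0 := by
        constructor
        · show (N ^ (a + 1).toNat) (x - w) = 0
          rw [map_sub, hw, sub_self]
        · rw [filRange_nonpos N le_rfl]; trivial
      have hx2 : x = (x - w) + w := by abel
      rw [hx2]
      exact Submodule.add_mem _ (piece_le N (by ring) hxw) hwF
    · push_neg at ha
      have he : a = -(((-a).toNat : ℕ) : ℤ) := by omega
      rw [he]
      refine hL6 (-a).toNat (filMonodromy N (-(((-a).toNat : ℕ) : ℤ))) ?_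
      intro j hj
      refine le_trans (Submodule.map_mono (IH (j : ℤ) (by omega))) ?_
      refine le_trans (mapFil N j (j : ℤ)) (filMonodromy_mono N (by omega))
  -- wrapper downward induction
  have wrapper : ∀ d : ℕ, ∀ a : ℤ, (k : ℤ) ≤ a + (d : ℤ) → W a ≤ filMonodromy N a := by
    intro d
    induction d with
    | zero => intro a ha; rw [hFtop a (by omega)]; exact le_top
    | succ d ih =>
      intro a ha
      by_cases h : (k : ℤ) ≤ a + (d : ℤ)
      · exact ih a h
      · exact hstep a fun a' ha' => ih a' (by omega)
  intro a
  exact le_antisymm (wrapper ((k : ℤ) - a).toNat a (by omega)) (hF_le_W a)
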